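/- Let S, A be finite nonempty sets, r : S × A → ℝ, P : S × A → (S → ℝ) with P(s,a)(s') ≥ 0 and ∑_{s'} P(s,a)(s') = 1, π : S → (A → ℝ) with π(s)(a) > 0 and ∑_a π(s)(a) = 1, and let 0 ≤ γ < 1 and α ≥ 0. Let T_H^π be the soft distributional Bellman operator (T_H^π Z)(s,a) = ∑_{s',a'} P(s,a)(s')·π(s')(a')·(x ↦ r(s,a) + γ(x − α·log π(s')(a')))_*(Z(s',a')). Suppose Z* is a family of Borel probability measures on ℝ with finite first moments satisfying T_H^π Z* = Z* (equality of measures at every (s,a)), and let (Z_k)_{k≥0} be defined by Z_{k+1} = T_H^π Z_k from an initial family Z₀ with finite first moments. Then max_{(s,a)} d_e(Z_k(s,a), Z*(s,a)) ≤ γ^k · max_{(s,a)} d_e(Z₀(s,a), Z*(s,a)) for all k, and in particular max_{(s,a)} d_e(Z_k(s,a), Z*(s,a)) → 0 as k → ∞. -/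

import Mathlib

open MeasureTheory ProbabilityTheory Filter
open scoped ENNReal Topology
open Set

/-- The energy distance (squared Cramér distance) between two measures on `ℝ`. -/
noncomputable def energyDist (μ ν : Measure ℝ) : ℝ≥0∞ :=
  ∫⁻ x, ENNReal.ofReal ((cdf μ x - cdf ν x) ^ 2)

lemma cdf_meas (μ : Measure ℝ) : Measurable (cdf μ) := (cdf μ).mono.measurable

lemma energy_integrand_meas (μ ν : Measure ℝ) :
    Measurable fun x => ENNReal.ofReal ((cdf μ x - cdf ν x) ^ 2) :=
  (((cdf_meas μ).sub (cdf_meas ν)).pow_const 2).ennreal_ofReal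

lemma aux_lintegral_affine (h : ℝ → ℝ≥0∞) (hm : Measurable h) {γ : ℝ} (hγ : 0 < γ) (e : ℝ) :
    ∫⁻ x, h (γ⁻¹ * x + e) = ENNReal.ofReal γ * ∫⁻ x, h x := by
  have h1 : ∫⁻ x, h (γ⁻¹ * x + e)
      = ∫⁻ y, h (y + e) ∂(Measure.map (fun x => γ⁻¹ * x) volume) := by
    rw [lintegral_map (f := fun y => h (y + e)) (hm.comp (measurable_add_const e))
      (measurable_const_mul _)]
  rw [h1, Real.map_volume_mul_left (inv_ne_zero (ne_of_gt hγ)), lintegral_smul_measure, smul_eq_mul,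
    lintegral_add_right_eq_self (fun y => h y) e, inv_inv, abs_of_pos hγ]

lemma moment_neg (μ : Measure ℝ) [IsProbabilityMeasure μ]
    (hInt : Integrable (fun x : ℝ => x) μ) :
    ∫⁻ x in Iio (0:ℝ), μ (Iic x) < ∞ := by
  have hswap : ∫⁻ x in Iio (0:ℝ), μ (Iic x) = ∫⁻ y, volume (Ico y 0) ∂μ := by
    have h1 : ∀ x : ℝ, μ (Iic x) = ∫⁻ y, (Iic x).indicator 1 y ∂μ := fun x =>
      (lintegral_indicator_one measurableSet_Iic).symm
    simp_rw [h1]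
    rw [lintegral_lintegral_swap]
    · refine lintegral_congr fun y => ?_
      have h2 : ∀ x : ℝ, (Iic x).indicator (1 : ℝ → ℝ≥0∞) y = (Ici y).indicator 1 x := by
        intro x
        by_cases h : y ≤ x <;> simp [Set.indicator, h]
      simp_rw [h2]
      rw [lintegral_indicator_one measurableSet_Ici, Measure.restrict_apply measurableSet_Ici,
        Ici_inter_Iio, Real.volume_Ico]
    · have : (Function.uncurry fun x y => (Iic x).indicator (1 : ℝ → ℝ≥0∞) y) =
          {p : ℝ × ℝ | p.2 ≤ p.1}.indicator 1 := by
        funext p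
        by_cases h : p.2 ≤ p.1 <;> simp [Function.uncurry, Set.indicator, h]
      rw [this]
      exact (measurable_const.indicator
        (measurableSet_le measurable_snd measurable_fst)).aemeasurable
  rw [hswap]
  calc ∫⁻ y, volume (Ico y 0) ∂μ ≤ ∫⁻ y, ↑‖y‖₊ ∂μ := by
        refine lintegral_mono fun y => ?_
        rw [Real.volume_Ico, ← ENNReal.ofReal_coe_nnreal, coe_nnnorm]
        exact ENNReal.ofReal_le_ofReal (by rw [Real.norm_eq_abs]; cases abs_cases y <;> linarith)
    _ < ∞ := hInt.2

lemma moment_pos (μ : Measure ℝ) [IsProbabilityMeasure μ]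
    (hInt : Integrable (fun x : ℝ => x) μ) :
    ∫⁻ x in Ici (0:ℝ), μ (Ioi x) < ∞ := by
  have hswap : ∫⁻ x in Ici (0:ℝ), μ (Ioi x) = ∫⁻ y, volume (Ico 0 y) ∂μ := by
    have h1 : ∀ x : ℝ, μ (Ioi x) = ∫⁻ y, (Ioi x).indicator 1 y ∂μ := fun x =>
      (lintegral_indicator_one measurableSet_Ioi).symm
    simp_rw [h1]
    rw [lintegral_lintegral_swap]
    · refine lintegral_congr fun y => ?_
      have h2 : ∀ x : ℝ, (Ioi x).indicator (1 : ℝ → ℝ≥0∞) y = (Iio y).indicator 1 x := by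
        intro x
        by_cases h : x < y <;> simp [Set.indicator, h]
      simp_rw [h2]
      rw [lintegral_indicator_one measurableSet_Iio, Measure.restrict_apply measurableSet_Iio,
        Iio_inter_Ici, Real.volume_Ico]
    · have : (Function.uncurry fun x y => (Ioi x).indicator (1 : ℝ → ℝ≥0∞) y) =
          {p : ℝ × ℝ | p.1 < p.2}.indicator 1 := by
        funext p
        by_cases h : p.1 < p.2 <;> simp [Function.uncurry, Set.indicator, h]
      rw [this]
      exact (measurable_const.indicator
        (measurableSet_lt measurable_fst measurable_snd)).aemeasurable
  rw [hswap]
  calc ∫⁻ y, volume (Ico 0 y) ∂μ ≤ ∫⁻ y, ↑‖y‖₊ ∂μ := by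
        refine lintegral_mono fun y => ?_
        rw [Real.volume_Ico, ← ENNReal.ofReal_coe_nnreal, coe_nnnorm]
        exact ENNReal.ofReal_le_ofReal (by rw [Real.norm_eq_abs]; cases abs_cases y <;> linarith)
    _ < ∞ := hInt.2

lemma energyDist_lt_top (μ ν : Measure ℝ) [IsProbabilityMeasure μ] [IsProbabilityMeasure ν]
    (hμ : Integrable (fun x : ℝ => x) μ) (hν : Integrable (fun x : ℝ => x) ν) :
    energyDist μ ν < ∞ := by
  set B : Measure ℝ → ℝ → ℝ≥0∞ := fun m x => if x < 0 then m (Iic x) else m (Ioi x) with hB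
  have hBmeas : ∀ m : Measure ℝ, Measurable (B m) := by
    intro m
    refine Measurable.ite measurableSet_Iio ?_ ?_
    · exact Monotone.measurable fun a b hab => measure_mono (Iic_subset_Iic.2 hab)
    · exact Antitone.measurable fun a b hab => measure_mono (Ioi_subset_Ioi hab)
  have hBint : ∀ (m : Measure ℝ) [IsProbabilityMeasure m],
      Integrable (fun x : ℝ => x) m → ∫⁻ x, B m x < ∞ := by
    intro m hm hInt
    rw [← lintegral_add_compl (B m) measurableSet_Iio, compl_Iio]
    have e1 : ∫⁻ x in Iio (0:ℝ), B m x = ∫⁻ x in Iio (0:ℝ), m (Iic x) :=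
      setLIntegral_congr_fun measurableSet_Iio (fun x hx => if_pos hx)
    have e2 : ∫⁻ x in Ici (0:ℝ), B m x = ∫⁻ x in Ici (0:ℝ), m (Ioi x) :=
      setLIntegral_congr_fun measurableSet_Ici (fun x hx => if_neg (not_lt.2 hx))
    rw [e1, e2]
    exact ENNReal.add_lt_top.2 ⟨moment_neg m hInt, moment_pos m hInt⟩
  have hpt : ∀ x : ℝ, ENNReal.ofReal ((cdf μ x - cdf ν x) ^ 2) ≤ B μ x + B ν x := by
    intro x
    have hμ1 : cdf μ x ≤ 1 := cdf_le_one μ x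
    have hν1 : cdf ν x ≤ 1 := cdf_le_one ν x
    have hμ0 : 0 ≤ cdf μ x := cdf_nonneg μ x
    have hν0 : 0 ≤ cdf ν x := cdf_nonneg ν x
    have hofμ : ENNReal.ofReal (cdf μ x) = μ (Iic x) := by
      rw [cdf_eq_real, measureReal_def, ENNReal.ofReal_toReal (measure_ne_top μ _)]
    have hofν : ENNReal.ofReal (cdf ν x) = ν (Iic x) := by
      rw [cdf_eq_real, measureReal_def, ENNReal.ofReal_toReal (measure_ne_top ν _)]
    have hsq : (cdf μ x - cdf ν x) ^ 2 ≤ |cdf μ x - cdf ν x| := by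
      have h1 : |cdf μ x - cdf ν x| ≤ 1 := abs_sub_le_iff.2 ⟨by linarith, by linarith⟩
      have h2 : (cdf μ x - cdf ν x) ^ 2 = |cdf μ x - cdf ν x| ^ 2 := (sq_abs _).symm
      nlinarith [abs_nonneg (cdf μ x - cdf ν x)]
    by_cases hx : x < 0
    · have : |cdf μ x - cdf ν x| ≤ cdf μ x + cdf ν x := by
        cases abs_cases (cdf μ x - cdf ν x) <;> linarith
      calc ENNReal.ofReal ((cdf μ x - cdf ν x) ^ 2)
          ≤ ENNReal.ofReal (cdf μ x + cdf ν x) := ENNReal.ofReal_le_ofReal (by linarith)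
        _ ≤ ENNReal.ofReal (cdf μ x) + ENNReal.ofReal (cdf ν x) := ENNReal.ofReal_add_le
        _ = B μ x + B ν x := by rw [hofμ, hofν, hB]; simp [hx]
    · have hcμ : ENNReal.ofReal (1 - cdf μ x) = μ (Ioi x) := by
        rw [cdf_eq_real, measureReal_def, ENNReal.ofReal_sub _ ENNReal.toReal_nonneg,
          ENNReal.ofReal_toReal (measure_ne_top μ _), ENNReal.ofReal_one, ← compl_Iic,
          measure_compl measurableSet_Iic (measure_ne_top μ _), measure_univ]
      have hcν : ENNReal.ofReal (1 - cdf ν x) = ν (Ioi x) := by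
        rw [cdf_eq_real, measureReal_def, ENNReal.ofReal_sub _ ENNReal.toReal_nonneg,
          ENNReal.ofReal_toReal (measure_ne_top ν _), ENNReal.ofReal_one, ← compl_Iic,
          measure_compl measurableSet_Iic (measure_ne_top ν _), measure_univ]
      have : |cdf μ x - cdf ν x| ≤ (1 - cdf μ x) + (1 - cdf ν x) := by
        cases abs_cases (cdf μ x - cdf ν x) <;> linarith
      calc ENNReal.ofReal ((cdf μ x - cdf ν x) ^ 2)
          ≤ ENNReal.ofReal ((1 - cdf μ x) + (1 - cdf ν x)) :=
            ENNReal.ofReal_le_ofReal (by linarith)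
        _ ≤ ENNReal.ofReal (1 - cdf μ x) + ENNReal.ofReal (1 - cdf ν x) := ENNReal.ofReal_add_le
        _ = B μ x + B ν x := by rw [hcμ, hcν, hB]; simp [hx]
  calc energyDist μ ν ≤ ∫⁻ x, (B μ x + B ν x) := lintegral_mono hpt
    _ = (∫⁻ x, B μ x) + ∫⁻ x, B ν x := lintegral_add_left (hBmeas μ) _
    _ < ∞ := ENNReal.add_lt_top.2 ⟨hBint μ hμ, hBint ν hν⟩

/-- The soft distributional Bellman operator: `(T_H^π Z)(s,a)` is the mixture over
successor pairs `(s',a')` of the pushforward of `Z(s',a')` under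
`x ↦ r(s,a) + γ(x − α log π(s')(a'))`. -/
noncomputable def softDistBellman {S A : Type*} [Fintype S] [Fintype A]
    (r : S × A → ℝ) (P : S × A → S → ℝ) (pol : S → A → ℝ) (γ α : ℝ)
    (Z : S × A → Measure ℝ) : S × A → Measure ℝ := fun p =>
  ∑ s' : S, ∑ a' : A,
    ENNReal.ofReal (P p s' * pol s' a') •
      Measure.map (fun x => r p + γ * (x - α * Real.log (pol s' a'))) (Z (s', a'))

section bellman

variable {S A : Type*} [Fintype S] [Fintype A]
variable (r : S × A → ℝ) (P : S × A → S → ℝ) (pol : S → A → ℝ) (γ α : ℝ)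

lemma softDistBellman_eq (Z : S × A → Measure ℝ) (p : S × A) :
    softDistBellman r P pol γ α Z p
      = ∑ q : S × A, ENNReal.ofReal (P p q.1 * pol q.1 q.2) •
        Measure.map (fun x => r p + γ * (x - α * Real.log (pol q.1 q.2))) (Z q) := by
  rw [softDistBellman, Fintype.sum_prod_type]

lemma weight_sum (hP1 : ∀ p, ∑ s', P p s' = 1) (hpol1 : ∀ s, ∑ a, pol s a = 1) (p : S × A) :
    ∑ q : S × A, P p q.1 * pol q.1 q.2 = 1 := by
  rw [Fintype.sum_prod_type]
  simp_rw [← Finset.mul_sum]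
  simp only [hpol1, mul_one]
  exact hP1 p

lemma softDistBellman_prob (hP0 : ∀ p s', 0 ≤ P p s') (hP1 : ∀ p, ∑ s', P p s' = 1)
    (hpol0 : ∀ s a, 0 < pol s a) (hpol1 : ∀ s, ∑ a, pol s a = 1)
    (Z : S × A → Measure ℝ) (hZ : ∀ p, IsProbabilityMeasure (Z p)) (p : S × A) :
    IsProbabilityMeasure (softDistBellman r P pol γ α Z p) := by
  constructor
  rw [softDistBellman_eq, Measure.finset_sum_apply]
  have h : ∀ q : S × A, (ENNReal.ofReal (P p q.1 * pol q.1 q.2) •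
      Measure.map (fun x => r p + γ * (x - α * Real.log (pol q.1 q.2))) (Z q)) univ
      = ENNReal.ofReal (P p q.1 * pol q.1 q.2) := by
    intro q
    haveI := hZ q
    haveI : IsProbabilityMeasure
        (Measure.map (fun x => r p + γ * (x - α * Real.log (pol q.1 q.2))) (Z q)) :=
      Measure.isProbabilityMeasure_map (by fun_prop)
    rw [Measure.smul_apply, measure_univ, smul_eq_mul, mul_one]
  simp_rw [h]
  rw [← ENNReal.ofReal_sum_of_nonneg (fun q _ => mul_nonneg (hP0 p q.1) (hpol0 q.1 q.2).le),
    weight_sum P pol hP1 hpol1 p, ENNReal.ofReal_one]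

lemma map_Iic_affine (μ : Measure ℝ) (hγ : 0 < γ) (b c t : ℝ) :
    Measure.map (fun x => b + γ * (x - c)) μ (Iic t) = μ (Iic ((t - b) / γ + c)) := by
  rw [Measure.map_apply (by fun_prop) measurableSet_Iic]
  congr 1
  ext x
  simp only [mem_preimage, mem_Iic]
  rw [← sub_le_iff_le_add, le_div_iff₀ hγ]
  constructor <;> intro h <;> nlinarith

lemma cdf_bellman (hP0 : ∀ p s', 0 ≤ P p s') (hP1 : ∀ p, ∑ s', P p s' = 1)
    (hpol0 : ∀ s a, 0 < pol s a) (hpol1 : ∀ s, ∑ a, pol s a = 1) (hγ : 0 < γ)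
    (Z : S × A → Measure ℝ) (hZ : ∀ p, IsProbabilityMeasure (Z p)) (p : S × A) (t : ℝ) :
    cdf (softDistBellman r P pol γ α Z p) t
      = ∑ q : S × A, (P p q.1 * pol q.1 q.2) *
          cdf (Z q) ((t - r p) / γ + α * Real.log (pol q.1 q.2)) := by
  haveI := softDistBellman_prob r P pol γ α hP0 hP1 hpol0 hpol1 Z hZ p
  have hterm : ∀ q : S × A, (ENNReal.ofReal (P p q.1 * pol q.1 q.2) •
      Measure.map (fun x => r p + γ * (x - α * Real.log (pol q.1 q.2))) (Z q)) (Iic t) ≠ ∞ := by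
    intro q
    haveI := hZ q
    haveI : IsProbabilityMeasure
        (Measure.map (fun x => r p + γ * (x - α * Real.log (pol q.1 q.2))) (Z q)) :=
      Measure.isProbabilityMeasure_map (by fun_prop)
    rw [Measure.smul_apply, smul_eq_mul]
    exact ENNReal.mul_ne_top ENNReal.ofReal_ne_top (measure_ne_top _ _)
  rw [cdf_eq_real, measureReal_def, softDistBellman_eq, Measure.finset_sum_apply,
    ENNReal.toReal_sum (fun q _ => hterm q)]
  refine Finset.sum_congr rfl fun q _ => ?_
  haveI := hZ q
  rw [Measure.smul_apply, smul_eq_mul, map_Iic_affine γ _ hγ, ENNReal.toReal_mul,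
    ENNReal.toReal_ofReal (mul_nonneg (hP0 p q.1) (hpol0 q.1 q.2).le), cdf_eq_real, measureReal_def]

end bellman

lemma softDistBellman_contract {S A : Type*} [Fintype S] [Fintype A]
    (r : S × A → ℝ) (P : S × A → S → ℝ) (pol : S → A → ℝ) (γ α : ℝ)
    (hP0 : ∀ p s', 0 ≤ P p s') (hP1 : ∀ p, ∑ s', P p s' = 1)
    (hpol0 : ∀ s a, 0 < pol s a) (hpol1 : ∀ s, ∑ a, pol s a = 1) (hγ0 : 0 ≤ γ)
    (Z Z' : S × A → Measure ℝ) (hZ : ∀ p, IsProbabilityMeasure (Z p))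
    (hZ' : ∀ p, IsProbabilityMeasure (Z' p)) (p : S × A) :
    energyDist (softDistBellman r P pol γ α Z p) (softDistBellman r P pol γ α Z' p)
      ≤ ENNReal.ofReal γ * ⨆ q : S × A, energyDist (Z q) (Z' q) := by
  rcases eq_or_lt_of_le hγ0 with hγ | hγ
  · -- γ = 0 : the operator is constant in Z
    subst hγ
    have hsame : softDistBellman r P pol 0 α Z p = softDistBellman r P pol 0 α Z' p := by
      rw [softDistBellman_eq, softDistBellman_eq]
      refine Finset.sum_congr rfl fun q _ => ?_
      haveI := hZ q; haveI := hZ' q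
      simp only [zero_mul, add_zero]
      rw [Measure.map_const, Measure.map_const, measure_univ, measure_univ]
    rw [hsame]
    have : energyDist (softDistBellman r P pol 0 α Z' p) (softDistBellman r P pol 0 α Z' p)
        = 0 := by
      simp [energyDist, sub_self]
    rw [this]
    exact zero_le
  · set M := ⨆ q : S × A, energyDist (Z q) (Z' q) with hM
    set w : S × A → ℝ := fun q => P p q.1 * pol q.1 q.2 with hw
    have hw0 : ∀ q, 0 ≤ w q := fun q => mul_nonneg (hP0 p q.1) (hpol0 q.1 q.2).le
    have hw1 : ∑ q : S × A, w q = 1 := weight_sum P pol hP1 hpol1 p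
    set g : S × A → ℝ → ℝ := fun q t => (t - r p) / γ + α * Real.log (pol q.1 q.2) with hg
    set δ : S × A → ℝ → ℝ := fun q x => cdf (Z q) x - cdf (Z' q) x with hδ
    have hδmeas : ∀ q, Measurable (δ q) := fun q => (cdf_meas _).sub (cdf_meas _)
    have hgmeas : ∀ q, Measurable (g q) := fun q => by fun_prop
    have hcdf : ∀ t, cdf (softDistBellman r P pol γ α Z p) t
        - cdf (softDistBellman r P pol γ α Z' p) t = ∑ q : S × A, w q * δ q (g q t) := by
      intro t
      rw [cdf_bellman r P pol γ α hP0 hP1 hpol0 hpol1 hγ Z hZ p t,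
        cdf_bellman r P pol γ α hP0 hP1 hpol0 hpol1 hγ Z' hZ' p t,
        ← Finset.sum_sub_distrib]
      refine Finset.sum_congr rfl fun q _ => ?_
      simp only [hw, hg, hδ]
      ring
    have key : ∀ t, ENNReal.ofReal ((cdf (softDistBellman r P pol γ α Z p) t
          - cdf (softDistBellman r P pol γ α Z' p) t) ^ 2)
        ≤ ∑ q : S × A, ENNReal.ofReal (w q) * ENNReal.ofReal ((δ q (g q t)) ^ 2) := by
      intro t
      rw [hcdf t]
      have hCS : (∑ q : S × A, w q * δ q (g q t)) ^ 2
          ≤ ∑ q : S × A, w q * (δ q (g q t)) ^ 2 := by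
        have h := Finset.sum_mul_sq_le_sq_mul_sq Finset.univ (fun q => Real.sqrt (w q))
          (fun q => Real.sqrt (w q) * δ q (g q t))
        have e1 : ∀ q : S × A, Real.sqrt (w q) * (Real.sqrt (w q) * δ q (g q t))
            = w q * δ q (g q t) := fun q => by rw [← mul_assoc, Real.mul_self_sqrt (hw0 q)]
        have e2 : ∀ q : S × A, Real.sqrt (w q) ^ 2 = w q := fun q => Real.sq_sqrt (hw0 q)
        have e3 : ∀ q : S × A, (Real.sqrt (w q) * δ q (g q t)) ^ 2
            = w q * (δ q (g q t)) ^ 2 := fun q => by rw [mul_pow, Real.sq_sqrt (hw0 q)]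
        simp_rw [e1, e2, e3, hw1, one_mul] at h
        exact h
      calc ENNReal.ofReal ((∑ q : S × A, w q * δ q (g q t)) ^ 2)
          ≤ ENNReal.ofReal (∑ q : S × A, w q * (δ q (g q t)) ^ 2) :=
            ENNReal.ofReal_le_ofReal hCS
        _ = ∑ q : S × A, ENNReal.ofReal (w q * (δ q (g q t)) ^ 2) :=
            ENNReal.ofReal_sum_of_nonneg fun q _ => mul_nonneg (hw0 q) (sq_nonneg _)
        _ = ∑ q : S × A, ENNReal.ofReal (w q) * ENNReal.ofReal ((δ q (g q t)) ^ 2) :=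
            Finset.sum_congr rfl fun q _ => ENNReal.ofReal_mul (hw0 q)
    have hchg : ∀ q : S × A, ∫⁻ t, ENNReal.ofReal ((δ q (g q t)) ^ 2)
        = ENNReal.ofReal γ * energyDist (Z q) (Z' q) := by
      intro q
      have hrepr : ∀ t : ℝ, g q t
          = γ⁻¹ * t + (α * Real.log (pol q.1 q.2) - r p * γ⁻¹) := by
        intro t
        simp only [hg, div_eq_mul_inv]
        ring
      simp_rw [hrepr]
      rw [aux_lintegral_affine (fun y => ENNReal.ofReal ((δ q y) ^ 2))
        (((hδmeas q).pow_const 2).ennreal_ofReal) hγ _]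
      rfl
    calc energyDist (softDistBellman r P pol γ α Z p) (softDistBellman r P pol γ α Z' p)
        ≤ ∫⁻ t, ∑ q : S × A, ENNReal.ofReal (w q) * ENNReal.ofReal ((δ q (g q t)) ^ 2) :=
          lintegral_mono key
      _ = ∑ q : S × A, ∫⁻ t, ENNReal.ofReal (w q) * ENNReal.ofReal ((δ q (g q t)) ^ 2) :=
          lintegral_finset_sum _ fun q _ =>
            ((((hδmeas q).comp (hgmeas q)).pow_const 2).ennreal_ofReal).const_mul _
      _ = ∑ q : S × A, ENNReal.ofReal (w q) * ∫⁻ t, ENNReal.ofReal ((δ q (g q t)) ^ 2) :=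
          Finset.sum_congr rfl fun q _ => lintegral_const_mul' _ _ ENNReal.ofReal_ne_top
      _ = ∑ q : S × A, ENNReal.ofReal (w q) * (ENNReal.ofReal γ * energyDist (Z q) (Z' q)) :=
          Finset.sum_congr rfl fun q _ => by rw [hchg q]
      _ ≤ ∑ q : S × A, ENNReal.ofReal (w q) * (ENNReal.ofReal γ * M) :=
          Finset.sum_le_sum fun q _ =>
            mul_le_mul_right (mul_le_mul_right (le_iSup (fun q => energyDist (Z q) (Z' q)) q) _) _
      _ = ENNReal.ofReal γ * M := by
          rw [← Finset.sum_mul, ← ENNReal.ofReal_sum_of_nonneg fun q _ => hw0 q, hw1,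
            ENNReal.ofReal_one, one_mul]

/-- Iterating the soft distributional Bellman operator converges geometrically, in the
supremal energy distance, to any fixed point `Z*` with finite first moments. -/
theorem softDistBellman_iterate_tendsto {S A : Type*}
    [Fintype S] [Fintype A] [Nonempty S] [Nonempty A]
    (r : S × A → ℝ) (P : S × A → S → ℝ) (pol : S → A → ℝ)
    (hP0 : ∀ p s', 0 ≤ P p s') (hP1 : ∀ p, ∑ s', P p s' = 1)
    (hpol0 : ∀ s a, 0 < pol s a) (hpol1 : ∀ s, ∑ a, pol s a = 1)
    (γ α : ℝ) (hγ0 : 0 ≤ γ) (hγ1 : γ < 1) (hα : 0 ≤ α)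
    (Zstar : S × A → Measure ℝ) [∀ p, IsProbabilityMeasure (Zstar p)]
    (hZstarInt : ∀ p, Integrable (fun x : ℝ => x) (Zstar p))
    (hfix : softDistBellman r P pol γ α Zstar = Zstar)
    (Z₀ : S × A → Measure ℝ) [∀ p, IsProbabilityMeasure (Z₀ p)]
    (hZ₀Int : ∀ p, Integrable (fun x : ℝ => x) (Z₀ p))
    (Zseq : ℕ → S × A → Measure ℝ) (hZseq0 : Zseq 0 = Z₀)
    (hZseq : ∀ k, Zseq (k + 1) = softDistBellman r P pol γ α (Zseq k)) :
    (∀ k, (⨆ p : S × A, energyDist (Zseq k p) (Zstar p)) ≤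
        ENNReal.ofReal γ ^ k * ⨆ p : S × A, energyDist (Z₀ p) (Zstar p)) ∧
      Tendsto (fun k => ⨆ p : S × A, energyDist (Zseq k p) (Zstar p)) atTop (𝓝 0) := by
  have hprob : ∀ k p, IsProbabilityMeasure (Zseq k p) := by
    intro k
    induction k with
    | zero => intro p; rw [hZseq0]; infer_instance
    | succ k ih =>
      intro p
      rw [hZseq k]
      exact softDistBellman_prob r P pol γ α hP0 hP1 hpol0 hpol1 _ ih p
  have hbound : ∀ k, (⨆ p : S × A, energyDist (Zseq k p) (Zstar p)) ≤
      ENNReal.ofReal γ ^ k * ⨆ p : S × A, energyDist (Z₀ p) (Zstar p) := by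
    intro k
    induction k with
    | zero => rw [hZseq0, pow_zero, one_mul]
    | succ k ih =>
      refine iSup_le fun p => ?_
      have step : energyDist (Zseq (k + 1) p) (Zstar p)
          ≤ ENNReal.ofReal γ * ⨆ q : S × A, energyDist (Zseq k q) (Zstar q) := by
        have h1 : energyDist (Zseq (k + 1) p) (Zstar p)
            = energyDist (softDistBellman r P pol γ α (Zseq k) p)
                (softDistBellman r P pol γ α Zstar p) := by rw [hZseq, hfix]
        rw [h1]
        exact softDistBellman_contract r P pol γ α hP0 hP1 hpol0 hpol1 hγ0 _ _
          (hprob k) inferInstance p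
      calc energyDist (Zseq (k + 1) p) (Zstar p)
          ≤ ENNReal.ofReal γ * ⨆ q : S × A, energyDist (Zseq k q) (Zstar q) := step
        _ ≤ ENNReal.ofReal γ *
              (ENNReal.ofReal γ ^ k * ⨆ p : S × A, energyDist (Z₀ p) (Zstar p)) :=
            mul_le_mul_right ih _
        _ = ENNReal.ofReal γ ^ (k + 1) * ⨆ p : S × A, energyDist (Z₀ p) (Zstar p) := by
            rw [pow_succ', mul_assoc]
  refine ⟨hbound, ?_⟩
  have hC : (⨆ p : S × A, energyDist (Z₀ p) (Zstar p)) ≠ ∞ := by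
    have hfin : ∀ p : S × A, energyDist (Z₀ p) (Zstar p) < ∞ := fun p =>
      energyDist_lt_top _ _ (hZ₀Int p) (hZstarInt p)
    have hle : (⨆ p : S × A, energyDist (Z₀ p) (Zstar p))
        ≤ Finset.univ.sup fun p : S × A => energyDist (Z₀ p) (Zstar p) :=
      iSup_le fun p => Finset.le_sup (f := fun p : S × A => energyDist (Z₀ p) (Zstar p)) (Finset.mem_univ p)
    refine ne_top_of_le_ne_top ?_ hle
    exact ((Finset.sup_lt_iff (bot_lt_top)).2 fun p _ => hfin p).ne
  have hlim : Tendsto (fun k => ENNReal.ofReal γ ^ k *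
      ⨆ p : S × A, energyDist (Z₀ p) (Zstar p)) atTop (𝓝 0) := by
    have h1 : Tendsto (fun k : ℕ => ENNReal.ofReal γ ^ k) atTop (𝓝 0) :=
      ENNReal.tendsto_pow_atTop_nhds_zero_of_lt_one (ENNReal.ofReal_lt_one.2 hγ1)
    simpa using ENNReal.Tendsto.mul_const h1 (Or.inr hC)
  exact tendsto_of_tendsto_of_tendsto_of_le_of_le tendsto_const_nhds hlim
    (fun k => zero_le) hbound
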